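/- Suppose a multifurcating Gibbs splitting rule p(n₁,...,n_k) = (a(k)/c(n)) Π_i w(n_i) with w(1)=1, a(2)=1, w(j)>0, is consistent, i.e., satisfies the consistency relation p(n₁,...,n_k) = Σ_i p(n₁,...,n_i+1,...,n_k) + p(n₁,...,n_k,1) + p(n₁+...+n_k,1)·p(n₁,...,n_k). Then there exist α < 1 and b > 0 such that (after rescaling) w(j+1)/w(j) = j - α for all j, i.e., w(j) = Γ(j-α)/Γ(1-α) up to geometric factors, or w(j+1)/w(j) is constant. -/

import Mathlib

open Finset

/-- part of Theorem 8: a consistent multifurcating Gibbs splitting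
rule `p(n₁,…,n_k) = (a k / c n) ∏ᵢ w nᵢ` has weight ratios `w(j+1)/w(j)`
affine of the form `b (j - α)` with `α < 1`, `b > 0`, or constant. -/
theorem multifurcating_gibbs_weights
    (w a c : ℕ → ℝ)
    (hw : ∀ j : ℕ, 1 ≤ j → 0 < w j) (hw1 : w 1 = 1)
    (ha2 : a 2 = 1) (ha : ∀ k : ℕ, 2 ≤ k → 0 ≤ a k)
    (hc : ∀ n : ℕ, 2 ≤ n → 0 < c n)
    (p : List ℕ → ℝ)
    (hp : ∀ ns : List ℕ, 2 ≤ ns.length → (∀ x ∈ ns, 1 ≤ x) →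
      p ns = a ns.length / c ns.sum * (ns.map w).prod)
    (hcons : ∀ ns : List ℕ, 2 ≤ ns.length → (∀ x ∈ ns, 1 ≤ x) →
      p ns = (∑ i ∈ Finset.range ns.length, p (ns.set i (ns.getD i 0 + 1))) +
        p (ns ++ [1]) + p [ns.sum, 1] * p ns) :
    (∃ α b : ℝ, α < 1 ∧ 0 < b ∧
        ∀ j : ℕ, 1 ≤ j → w (j + 1) / w j = b * ((j : ℝ) - α)) ∨
      (∃ r : ℝ, 0 < r ∧ ∀ j : ℕ, 1 ≤ j → w (j + 1) / w j = r) := by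
  set W : ℕ → ℝ := fun j => w (j + 1) / w j with hW
  -- Key consistency consequence for k = 2 splits
  have key : ∀ n₁ n₂ : ℕ, 1 ≤ n₁ → 1 ≤ n₂ →
      W n₁ + W n₂ = c (n₁+n₂+1)/c (n₁+n₂) - a 3 - w (n₁+n₂)/c (n₁+n₂) := by
    intro n₁ n₂ h1 h2
    have hE := hcons [n₁, n₂] (by simp) (by intro x hx; simp at hx; rcases hx with h|h <;> omega)
    simp [Finset.sum_range_succ] at hE
    rw [hp [n₁,n₂] (by simp) (by intro x hx; simp at hx; rcases hx with h|h <;> omega),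
        hp [n₁+1,n₂] (by simp) (by intro x hx; simp at hx; rcases hx with h|h <;> omega),
        hp [n₁,n₂+1] (by simp) (by intro x hx; simp at hx; rcases hx with h|h <;> omega),
        hp [n₁,n₂,1] (by simp) (by intro x hx; simp at hx; rcases hx with h|h|h <;> omega),
        hp [n₁+n₂,1] (by simp) (by intro x hx; simp at hx; rcases hx with h|h <;> omega)] at hE
    simp [hw1, ha2] at hE
    have e1 : n₁+1+n₂ = n₁+n₂+1 := by omega
    have e2 : n₁+(n₂+1) = n₁+n₂+1 := by omega
    rw [e1, e2] at hE
    have hw1p := hw n₁ h1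
    have hw2p := hw n₂ h2
    have hcn := hc (n₁+n₂) (by omega)
    have hcn1 := hc (n₁+n₂+1) (by omega)
    field_simp at hE
    have hE' : w n₁ * w n₂ * c (n₁+n₂+1) =
        (w (n₁+1)*w n₂ + w n₁*w (n₂+1) + a 3 * (w n₁*w n₂)) * c (n₁+n₂)
          + w (n₁+n₂) * (w n₁ * w n₂) := by
      have h0 : c (n₁+n₂+1) * c (n₁+n₂) ≠ 0 := by positivity
      apply mul_right_cancel₀ h0
      linear_combination (c (n₁+n₂+1) * c (n₁+n₂)) * hE
    show w (n₁+1) / w n₁ + w (n₂+1) / w n₂ = _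
    rw [div_add_div _ _ hw1p.ne' hw2p.ne', div_eq_iff (by positivity)]
    have hrw : c (n₁+n₂+1) / c (n₁+n₂) - a 3 - w (n₁+n₂) / c (n₁+n₂)
        = (c (n₁+n₂+1) - a 3 * c (n₁+n₂) - w (n₁+n₂)) / c (n₁+n₂) := by
      field_simp
    rw [hrw, div_mul_eq_mul_div, eq_div_iff hcn.ne']
    linear_combination -hE'
  have hWpos : ∀ j : ℕ, 1 ≤ j → 0 < W j := fun j hj =>
    div_pos (hw (j+1) (by omega)) (hw j hj)
  -- constant difference
  set d : ℝ := W 2 - W 1 with hd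
  have hdiff : ∀ j : ℕ, 1 ≤ j → W (j+1) - W j = d := by
    intro j hj
    have h1 : W (j+1) + W 1 = c (j+1+1+1)/c (j+1+1) - a 3 - w (j+1+1)/c (j+1+1) :=
      key (j+1) 1 (by omega) le_rfl
    have h2 : W j + W 2 = c (j+2+1)/c (j+2) - a 3 - w (j+2)/c (j+2) :=
      key j 2 hj (by omega)
    have e1 : j+1+1 = j+2 := by omega
    rw [e1] at h1
    rw [hd]
    linarith [h1, h2]
  have hform : ∀ j : ℕ, 1 ≤ j → W j = W 1 + ((j : ℝ) - 1) * d := by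
    intro j hj
    induction j, hj using Nat.le_induction with
    | base => simp
    | succ n hn ih =>
      have := hdiff n hn
      push_cast
      rw [show W (n+1) = W n + d by linarith, ih]
      ring
  rcases lt_trichotomy d 0 with hdlt | hdeq | hdgt
  · -- d < 0 : contradiction with positivity of W
    exfalso
    obtain ⟨n, hn⟩ := exists_nat_gt (W 1 / (-d))
    have hWn := hform (n+1) (by omega)
    have hWnpos := hWpos (n+1) (by omega)
    have hnd : W 1 < (n : ℝ) * (-d) := (div_lt_iff₀ (by linarith)).mp hn
    push_cast at hWn
    nlinarith
  · -- d = 0 : constant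
    right
    exact ⟨W 1, hWpos 1 le_rfl, fun j hj => by
      have := hform j hj; rw [hdeq] at this; simpa using this⟩
  · -- d > 0 : affine
    left
    refine ⟨1 - W 1 / d, d, ?_, hdgt, fun j hj => ?_⟩
    · have : 0 < W 1 / d := div_pos (hWpos 1 le_rfl) hdgt
      linarith
    · have hWj := hform j hj
      have : d * ((j : ℝ) - (1 - W 1 / d)) = W 1 + ((j : ℝ) - 1) * d := by
        field_simp
        ring
      rw [show w (j+1)/w j = W j from rfl, hWj, this]
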